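/- Let T > 0 and define Θ : ℝ × ℝ³ → ℝ by Θ(t,x) = 2·((T−t)/‖x‖²)^{1/2} = 2√(T−t)/‖x‖. Then for every t < T and every x ≠ 0, the function Θ solves the singular heat equation ∂_t Θ(t,x) + Δ_x (1/Θ(t,·))(x) = 0, where Δ_x denotes the Euclidean Laplacian in the space variable; explicitly, ∂_t Θ(t,x) = −1/(√(T−t)·‖x‖) and Δ_x (y ↦ ‖y‖/(2√(T−t)))(x) = 1/(√(T−t)·‖x‖). -/

import Mathlib

open MeasureTheory Real

/-- The Euclidean Laplacian on `EuclideanSpace ℝ (Fin n)`: the sum of second partial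
derivatives with respect to the standard orthonormal basis. -/
noncomputable def euclideanLaplacian {n : ℕ} (f : EuclideanSpace ℝ (Fin n) → ℝ)
    (x : EuclideanSpace ℝ (Fin n)) : ℝ :=
  ∑ i : Fin n,
    fderiv ℝ (fun y => fderiv ℝ f y (EuclideanSpace.single i 1)) x (EuclideanSpace.single i 1)

section aux

variable {n : ℕ}

lemma norm_hasFDerivAt (x : EuclideanSpace ℝ (Fin n)) (hx : x ≠ 0) :
    HasFDerivAt (fun y : EuclideanSpace ℝ (Fin n) => ‖y‖) (‖x‖⁻¹ • innerSL ℝ x) x := by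
  have hnx : ‖x‖ ≠ 0 := norm_ne_zero_iff.2 hx
  have h1 : HasFDerivAt (fun y : EuclideanSpace ℝ (Fin n) => ‖y‖ ^ 2)
      ((2 : ℕ) • innerSL ℝ x) x := (hasStrictFDerivAt_norm_sq x).hasFDerivAt
  have h2 : HasDerivAt Real.sqrt (1 / (2 * Real.sqrt (‖x‖ ^ 2))) (‖x‖ ^ 2) :=
    Real.hasDerivAt_sqrt (pow_ne_zero 2 hnx)
  have h3 := h2.comp_hasFDerivAt x h1
  have heq : (Real.sqrt ∘ fun y : EuclideanSpace ℝ (Fin n) => ‖y‖ ^ 2)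
      = fun y => ‖y‖ := funext fun y => by
    simp [Function.comp, Real.sqrt_sq (norm_nonneg y)]
  rw [heq] at h3
  convert h3 using 1
  iterate 3 rfl
  ext v
  rw [Real.sqrt_sq (norm_nonneg x)]
  simp [smul_smul]
  field_simp

lemma term_fderiv (x : EuclideanSpace ℝ (Fin n)) (hx : x ≠ 0) (i : Fin n) :
    fderiv ℝ (fun y : EuclideanSpace ℝ (Fin n) => y i * ‖y‖⁻¹) x (EuclideanSpace.single i 1)
      = ‖x‖⁻¹ - (x i) ^ 2 * (‖x‖ ^ 3)⁻¹ := by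
  have hnx : ‖x‖ ≠ 0 := norm_ne_zero_iff.2 hx
  have hinv : HasFDerivAt (fun y : EuclideanSpace ℝ (Fin n) => ‖y‖⁻¹)
      ((-(‖x‖ ^ 2)⁻¹ : ℝ) • (‖x‖⁻¹ • innerSL ℝ x)) x :=
    (hasDerivAt_inv hnx).comp_hasFDerivAt x (norm_hasFDerivAt x hx)
  have hmul : HasFDerivAt (fun y : EuclideanSpace ℝ (Fin n) => y i * ‖y‖⁻¹)
      (x i • ((-(‖x‖ ^ 2)⁻¹ : ℝ) • (‖x‖⁻¹ • innerSL ℝ x))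
        + ‖x‖⁻¹ • EuclideanSpace.proj (𝕜 := ℝ) i) x :=
    (EuclideanSpace.proj (𝕜 := ℝ) i).hasFDerivAt.mul hinv
  rw [hmul.fderiv]
  have hsingle : (EuclideanSpace.single i (1 : ℝ)) i = 1 := by
    simp [EuclideanSpace.single_apply]
  have hproj : (EuclideanSpace.proj (𝕜 := ℝ) i) (EuclideanSpace.single i (1 : ℝ)) = 1 := by
    simpa using hsingle
  simp only [ContinuousLinearMap.add_apply, ContinuousLinearMap.smul_apply,
    ContinuousLinearMap.coe_smul', Pi.smul_apply, innerSL_apply_apply, hproj, real_inner_comm]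
  rw [EuclideanSpace.inner_single_right]
  simp only [map_one, one_mul, RCLike.star_def, conj_trivial, smul_eq_mul]
  field_simp
  ring

lemma lap_norm_div (x : EuclideanSpace ℝ (Fin 3)) (hx : x ≠ 0) (c : ℝ) (hc : c ≠ 0) :
    euclideanLaplacian (fun y => ‖y‖ / c) x = 2 / (c * ‖x‖) := by
  have hnx : ‖x‖ ≠ 0 := norm_ne_zero_iff.2 hx
  have key : ∀ i : Fin 3,
      fderiv ℝ (fun y => fderiv ℝ (fun z : EuclideanSpace ℝ (Fin 3) => ‖z‖ / c) y
        (EuclideanSpace.single i 1)) x (EuclideanSpace.single i 1)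
      = c⁻¹ * (‖x‖⁻¹ - (x i) ^ 2 * (‖x‖ ^ 3)⁻¹) := by
    intro i
    have hev : (fun y : EuclideanSpace ℝ (Fin 3) =>
        fderiv ℝ (fun z : EuclideanSpace ℝ (Fin 3) => ‖z‖ / c) y (EuclideanSpace.single i 1))
        =ᶠ[nhds x] fun y => c⁻¹ * (y i * ‖y‖⁻¹) := by
      have hopen : IsOpen {y : EuclideanSpace ℝ (Fin 3) | y ≠ 0} :=
        isOpen_compl_singleton
      filter_upwards [hopen.mem_nhds hx] with y hy
      have hny : ‖y‖ ≠ 0 := norm_ne_zero_iff.2 hy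
      have hd := (norm_hasFDerivAt y hy).mul_const c⁻¹
      simp only [div_eq_mul_inv]
      rw [hd.fderiv]
      simp only [ContinuousLinearMap.coe_smul', Pi.smul_apply,
        ContinuousLinearMap.smul_apply, innerSL_apply_apply]
      rw [EuclideanSpace.inner_single_right]
      simp only [one_mul, RCLike.star_def, conj_trivial, smul_eq_mul]
      field_simp
    rw [hev.fderiv_eq]
    have hdiff : DifferentiableAt ℝ
        (fun y : EuclideanSpace ℝ (Fin 3) => y i * ‖y‖⁻¹) x := by
      have hinv : HasFDerivAt (fun y : EuclideanSpace ℝ (Fin 3) => ‖y‖⁻¹)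
          ((-(‖x‖ ^ 2)⁻¹ : ℝ) • (‖x‖⁻¹ • innerSL ℝ x)) x :=
        (hasDerivAt_inv hnx).comp_hasFDerivAt x (norm_hasFDerivAt x hx)
      exact ((EuclideanSpace.proj (𝕜 := ℝ) i).hasFDerivAt.mul hinv).differentiableAt
    rw [fderiv_const_mul hdiff]
    simp only [ContinuousLinearMap.coe_smul', Pi.smul_apply, smul_eq_mul]
    rw [term_fderiv x hx i]
  unfold euclideanLaplacian
  simp only [key]
  have hsum : ∑ i : Fin 3, (x i) ^ 2 = ‖x‖ ^ 2 := by
    rw [← real_inner_self_eq_norm_sq]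
    simp only [PiLp.inner_apply, sq, RCLike.inner_apply, conj_trivial]
  rw [← Finset.mul_sum]
  rw [Finset.sum_sub_distrib]
  rw [← Finset.sum_mul, hsum]
  simp only [Finset.sum_const, Finset.card_univ, Fintype.card_fin, nsmul_eq_mul]
  field_simp
  ring

end aux

/-- The explicit function `Θ(t,x) = 2√(T−t)/‖x‖` solves the singular heat equation
`∂ₜΘ + Δ(1/Θ) = 0` for `t < T`, `x ≠ 0`, with the stated explicit values of the
time derivative and of the Laplacian of `y ↦ ‖y‖/(2√(T−t)) = 1/Θ(t,y)`. -/
theorem explicit_solution_singular_heat (T : ℝ) (hT : 0 < T)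
    (Θ : ℝ → EuclideanSpace ℝ (Fin 3) → ℝ)
    (hΘ : ∀ t x, Θ t x = 2 * Real.sqrt (T - t) / ‖x‖) :
    ∀ t : ℝ, t < T → ∀ x : EuclideanSpace ℝ (Fin 3), x ≠ 0 →
      deriv (fun s => Θ s x) t = -(1 / (Real.sqrt (T - t) * ‖x‖)) ∧
      euclideanLaplacian (fun y => ‖y‖ / (2 * Real.sqrt (T - t))) x
        = 1 / (Real.sqrt (T - t) * ‖x‖) ∧
      deriv (fun s => Θ s x) t + euclideanLaplacian (fun y => 1 / Θ t y) x = 0 := by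
  intro t ht x hx
  have hTt : 0 < T - t := by linarith
  have hs : Real.sqrt (T - t) ≠ 0 := Real.sqrt_ne_zero'.2 hTt
  have hspos : 0 < Real.sqrt (T - t) := Real.sqrt_pos.2 hTt
  have hnx : ‖x‖ ≠ 0 := norm_ne_zero_iff.2 hx
  have hfun : (fun s => Θ s x) = fun s => 2 * Real.sqrt (T - s) / ‖x‖ :=
    funext fun s => hΘ s x
  have hderiv : deriv (fun s => Θ s x) t = -(1 / (Real.sqrt (T - t) * ‖x‖)) := by
    rw [hfun]
    have h1 : HasDerivAt (fun s : ℝ => T - s) (-1) t := by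
      simpa using (hasDerivAt_id t).const_sub T
    have h2 : HasDerivAt Real.sqrt (1 / (2 * Real.sqrt (T - t))) (T - t) :=
      Real.hasDerivAt_sqrt (ne_of_gt hTt)
    have h3 : HasDerivAt (fun s => Real.sqrt (T - s))
        (1 / (2 * Real.sqrt (T - t)) * (-1)) t := h2.comp t h1
    have h4 := ((h3.const_mul 2).div_const ‖x‖)
    rw [h4.deriv]
    field_simp
  have hlap : euclideanLaplacian (fun y => ‖y‖ / (2 * Real.sqrt (T - t))) x
      = 1 / (Real.sqrt (T - t) * ‖x‖) := by
    rw [lap_norm_div x hx _ (by positivity)]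
    rw [div_eq_div_iff (by positivity) (by positivity)]
    ring
  refine ⟨hderiv, hlap, ?_⟩
  have hinv : (fun y : EuclideanSpace ℝ (Fin 3) => 1 / Θ t y)
      = fun y => ‖y‖ / (2 * Real.sqrt (T - t)) := by
    funext y
    rw [hΘ t y, one_div_div]
  rw [hinv, hderiv, hlap]
  ring
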